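/- In ℂ⁶ with basis e₀,…,e₅, let ω₀ = e₀∧e₂ + e₁∧e₃, ω₁ = e₀∧e₄ + e₁∧e₅, ω₂ = e₀∧e₁ + e₂∧e₅ + e₃∧e₄, and ω = −z·e₀∧e₁ − c·(e₂∧e₅ − e₃∧e₄) with z,c ∈ ℂ nonzero. Then the Pfaffian cubic Pf(tω + x₀ω₀ + x₁ω₁ + x₂ω₂) equals (up to a nonzero constant) zc²t³ − c²t²x₂ − ztx₂² − 2ctx₀x₁ + x₂³. -/
import Mathlib


open ExteriorAlgebra

noncomputable section

abbrev V6 := Fin 6 → ℂ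

/-- standard basis vectors of ℂ⁶ -/
def e (i : Fin 6) : V6 := Pi.single i 1

/-- image of basis vectors in the exterior algebra -/
def ev (i : Fin 6) : ExteriorAlgebra ℂ V6 := ExteriorAlgebra.ι ℂ (e i)

/-- the volume element e₀∧e₁∧e₂∧e₃∧e₄∧e₅ -/
def vol : ExteriorAlgebra ℂ V6 := ev 0 * ev 1 * ev 2 * ev 3 * ev 4 * ev 5

lemma ev_sq (i : Fin 6) : ev i * ev i = 0 := ι_sq_zero (e i)
lemma ev_sq' (i : Fin 6) (x : ExteriorAlgebra ℂ V6) : ev i * (ev i * x) = 0 := by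
  rw [← mul_assoc, ev_sq, zero_mul]
lemma ev_swap (i j : Fin 6) (_h : j < i) : ev i * ev j = -(ev j * ev i) := by
  rw [eq_neg_iff_add_eq_zero]; exact ι_add_mul_swap (R := ℂ) (e i) (e j)
lemma ev_swap' (i j : Fin 6) (h : j < i) (x : ExteriorAlgebra ℂ V6) :
    ev i * (ev j * x) = -(ev j * (ev i * x)) := by
  rw [← mul_assoc, ev_swap i j h, neg_mul, mul_assoc]

set_option maxHeartbeats 4000000 in

/-- For ω₀ = e₀∧e₂ + e₁∧e₃, ω₁ = e₀∧e₄ + e₁∧e₅, ω₂ = e₀∧e₁ + e₂∧e₅ + e₃∧e₄ and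
ω = −z·e₀∧e₁ − c·(e₂∧e₅ − e₃∧e₄) with z, c nonzero, the Pfaffian cubic of
tω + x₀ω₀ + x₁ω₁ + x₂ω₂ equals, up to a fixed nonzero constant,
zc²t³ − c²t²x₂ − ztx₂² − 2ctx₀x₁ + x₂³. -/
theorem example_one_pfaffian
    (ω₀ ω₁ ω₂ : ExteriorAlgebra ℂ V6)
    (h₀ : ω₀ = ev 0 * ev 2 + ev 1 * ev 3)
    (h₁ : ω₁ = ev 0 * ev 4 + ev 1 * ev 5)
    (h₂ : ω₂ = ev 0 * ev 1 + ev 2 * ev 5 + ev 3 * ev 4) :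
    ∃ k : ℂ, k ≠ 0 ∧ ∀ z c : ℂ, z ≠ 0 → c ≠ 0 →
      ∀ t x₀ x₁ x₂ : ℂ,
      (t • (-z • (ev 0 * ev 1) - c • (ev 2 * ev 5 - ev 3 * ev 4))
        + x₀ • ω₀ + x₁ • ω₁ + x₂ • ω₂) *
      (t • (-z • (ev 0 * ev 1) - c • (ev 2 * ev 5 - ev 3 * ev 4))
        + x₀ • ω₀ + x₁ • ω₁ + x₂ • ω₂) *
      (t • (-z • (ev 0 * ev 1) - c • (ev 2 * ev 5 - ev 3 * ev 4))
        + x₀ • ω₀ + x₁ • ω₁ + x₂ • ω₂)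
        = (k * (z * c^2 * t^3 - c^2 * t^2 * x₂ - z * t * x₂^2
            - 2 * c * t * x₀ * x₁ + x₂^3)) • vol := by
  refine ⟨6, by norm_num, ?_⟩
  intro z c hz hc t x₀ x₁ x₂
  subst h₀ h₁ h₂
  simp only [vol, smul_sub, smul_neg, smul_smul, smul_add, mul_add, add_mul, sub_mul, mul_sub,
    neg_mul, mul_neg, smul_mul_assoc, mul_smul_comm, neg_neg, neg_smul]
  simp (config := { decide := true }) only [mul_assoc, ev_swap, ev_swap', ev_sq, ev_sq',
    neg_mul, mul_neg, neg_neg, mul_zero, zero_mul, smul_zero, neg_zero, smul_neg, smul_smul]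
  module
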